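/- Suppose f ∈ ℤ[x] has degree nr and f(x) ≡ (xⁿ − 1)^r (mod m) with m ≥ 2. If g is a factor of f over ℤ having no cyclotomic factors and g(1) ≠ 0, then μ(g) ≥ log(m/2^r)·(deg g)/(nr). -/

import Mathlib

open Polynomial

/-- The logarithmic Mahler measure of an integer polynomial:
`μ(g) = log|lead(g)| + Σ log⁺|α|` over the complex roots `α` of `g`. -/
noncomputable def mahlerMeasure (g : Polynomial ℤ) : ℝ :=
  Real.log |(g.leadingCoeff : ℝ)| +
    (((g.map (Int.castRingHom ℂ)).roots).map
      (fun z => Real.log (max 1 (‖z‖)))).sum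

/-- `g` has no cyclotomic factors. -/
def NoCyclotomicFactor (g : Polynomial ℤ) : Prop :=
  ∀ k : ℕ, 0 < k → ¬ (Polynomial.cyclotomic k ℤ ∣ g)

/-- The logarithmic supremum norm of a complex polynomial on the unit circle. -/
noncomputable def nuC (T : Polynomial ℂ) : ℝ :=
  Real.log (sSup ((fun z => ‖T.eval z‖) '' {z : ℂ | ‖z‖ = 1}))

/- ### Auxiliary lemmas -/

lemma evalMapHom {K L : Type*} [CommRing K] [CommRing L] (φ : K →+* L)
    (q : Polynomial K) (b : K) : (q.map φ).eval (φ b) = φ (q.eval b) := by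
  rw [eval_map, eval₂_at_apply]

/-- A product of the values of an integer polynomial `q` over the multiset of complex
roots of an integer polynomial `p` is a rational number. -/
lemma prod_eval_roots_rat (p q : Polynomial ℤ) :
    ∃ s : ℚ, (((p.map (Int.castRingHom ℂ)).roots).map
      (fun a => (q.map (Int.castRingHom ℂ)).eval a)).prod = (s : ℂ) := by
  set p0 : Polynomial ℚ := p.map (Int.castRingHom ℚ) with hp0
  set K := p0.SplittingField
  haveI : Normal ℚ K := Polynomial.SplittingField.instNormal p0
  haveI : IsGalois ℚ K := ⟨⟩
  set pK : Polynomial K := p0.map (algebraMap ℚ K) with hpK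
  have hsplit : pK.Splits :=
    SplittingField.splits p0
  let φ : K →ₐ[ℚ] ℂ := IsAlgClosed.lift
  have hpmap : p.map (Int.castRingHom ℂ) = pK.map φ.toRingHom := by
    show map (Int.castRingHom ℂ) p
        = map φ.toRingHom (map (algebraMap ℚ K) (map (Int.castRingHom ℚ) p))
    rw [Polynomial.map_map, Polynomial.map_map]
    congr 1
    exact RingHom.ext_int _ _
  have hqmap : q.map (Int.castRingHom ℂ)
      = (q.map (Int.castRingHom K)).map φ.toRingHom := by
    rw [Polynomial.map_map]; congr 1; exact RingHom.ext_int _ _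
  set qK : Polynomial K := q.map (Int.castRingHom K) with hqK
  set t : K := (pK.roots.map fun b => qK.eval b).prod with ht
  have hprod : (((p.map (Int.castRingHom ℂ)).roots).map
      (fun a => (q.map (Int.castRingHom ℂ)).eval a)).prod = φ t := by
    rw [hpmap, hsplit.roots_map _, Multiset.map_map, ht, map_multiset_prod,
      Multiset.map_map]
    congr 1
    apply Multiset.map_congr rfl
    intro b _
    show (q.map (Int.castRingHom ℂ)).eval (φ b) = φ (qK.eval b)
    rw [hqmap]
    exact evalMapHom φ.toRingHom qK b
  have hfix : ∀ σ : K ≃ₐ[ℚ] K, σ t = t := by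
    intro σ
    have h1 : pK.map σ.toAlgHom.toRingHom = pK := by
      show map _ (map (algebraMap ℚ K) p0) = map (algebraMap ℚ K) p0
      rw [Polynomial.map_map]
      congr 1
      ext x
      simp
    have hroots : pK.roots.map σ = pK.roots := by
      conv_rhs => rw [← h1]
      rw [hsplit.roots_map _]
      rfl
    have h2 : qK.map σ.toAlgHom.toRingHom = qK := by
      show map _ (map (Int.castRingHom K) q) = map (Int.castRingHom K) q
      rw [Polynomial.map_map]; congr 1; exact RingHom.ext_int _ _
    rw [ht, map_multiset_prod, Multiset.map_map]
    conv_rhs => rw [← hroots, Multiset.map_map]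
    congr 1
    apply Multiset.map_congr rfl
    intro b _
    show σ (qK.eval b) = qK.eval (σ b)
    conv_rhs => rw [← h2]
    exact (evalMapHom σ.toAlgHom.toRingHom qK b).symm
  have hbot : t ∈ (⊥ : IntermediateField ℚ K) := by
    rw [← IsGalois.fixedField_fixingSubgroup (⊥ : IntermediateField ℚ K)]
    intro σ
    exact hfix σ.1
  obtain ⟨s, hs⟩ := IntermediateField.mem_bot.1 hbot
  refine ⟨s, ?_⟩
  rw [hprod, ← hs]
  show φ (algebraMap ℚ K s) = _
  rw [φ.commutes]
  simp

lemma msProdSwap (s t : Multiset ℂ) (f : ℂ → ℂ → ℂ) :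
    (s.map fun a => (t.map fun b => f a b).prod).prod
      = (t.map fun b => (s.map fun a => f a b).prod).prod := by
  induction s using Multiset.induction with
  | empty => simp
  | cons a s ih => simp [Multiset.prod_map_mul, ih]

lemma msProdConstMul {α M : Type*} [CommMonoid M] (s : Multiset α) (c : M) (h : α → M) :
    (s.map fun a => c * h a).prod = c ^ Multiset.card s * (s.map h).prod := by
  induction s using Multiset.induction with
  | empty => simp
  | cons a s ih =>
    simp only [Multiset.map_cons, Multiset.prod_cons, Multiset.card_cons, ih, pow_succ]
    simp only [mul_assoc, mul_left_comm, mul_comm]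

lemma msProdLe (s : Multiset ℂ) (f g : ℂ → ℝ)
    (h0 : ∀ a ∈ s, 0 ≤ f a) (h : ∀ a ∈ s, f a ≤ g a) :
    (s.map f).prod ≤ (s.map g).prod := by
  induction s using Multiset.induction with
  | empty => simp
  | cons a s ih =>
    simp only [Multiset.map_cons, Multiset.prod_cons]
    have hf : ∀ x ∈ s, 0 ≤ f x := fun x hx => h0 x (Multiset.mem_cons_of_mem hx)
    have hfg : ∀ x ∈ s, f x ≤ g x := fun x hx => h x (Multiset.mem_cons_of_mem hx)
    have hps : (0:ℝ) ≤ (s.map f).prod :=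
      Multiset.prod_nonneg (by
        intro x hx
        obtain ⟨y, hy, rfl⟩ := Multiset.mem_map.1 hx
        exact hf y hy)
    exact mul_le_mul (h a (Multiset.mem_cons_self a s)) (ih hf hfg) hps
      (le_trans (h0 a (Multiset.mem_cons_self a s)) (h a (Multiset.mem_cons_self a s)))

lemma msOneLeProd (s : Multiset ℂ) (f : ℂ → ℝ) (h : ∀ a ∈ s, 1 ≤ f a) :
    1 ≤ (s.map f).prod := by
  induction s using Multiset.induction with
  | empty => simp
  | cons a s ih =>
    simp only [Multiset.map_cons, Multiset.prod_cons]
    have h1 := h a (Multiset.mem_cons_self a s)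
    have h2 := ih fun x hx => h x (Multiset.mem_cons_of_mem hx)
    nlinarith

lemma msLogProd (s : Multiset ℂ) (f : ℂ → ℝ) (h : ∀ a ∈ s, 1 ≤ f a) :
    Real.log ((s.map f).prod) = (s.map fun a => Real.log (f a)).sum := by
  induction s using Multiset.induction with
  | empty => simp
  | cons a s ih =>
    simp only [Multiset.map_cons, Multiset.prod_cons, Multiset.sum_cons]
    have h1 := h a (Multiset.mem_cons_self a s)
    have h2 := msOneLeProd s f fun x hx => h x (Multiset.mem_cons_of_mem hx)
    rw [Real.log_mul (by linarith) (by linarith),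
      ih fun x hx => h x (Multiset.mem_cons_of_mem hx)]

lemma intOfRatIsIntegral (x : ℂ) (hx : IsIntegral ℤ x) (s : ℚ) (hs : x = (s:ℂ)) :
    ∃ a : ℤ, x = (a : ℂ) := by
  have h1 : IsIntegral ℤ ((IsScalarTower.toAlgHom ℤ ℚ ℂ) s) := by
    simpa [IsScalarTower.toAlgHom_apply] using (by rw [← hs]; exact hx : IsIntegral ℤ (s:ℂ))
  have h2 : IsIntegral ℤ s :=
    (isIntegral_algHom_iff (IsScalarTower.toAlgHom ℤ ℚ ℂ)
      (fun a b hab => by simpa using hab)).1 h1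
  obtain ⟨a, ha⟩ := IsIntegrallyClosed.isIntegral_iff.1 h2
  exact ⟨a, by rw [hs, ← ha]; simp⟩

/-- Evaluation of an integer polynomial at an algebraic integer is an algebraic integer. -/
lemma evalIsIntegral (q : Polynomial ℤ) (z : ℂ) (hz : IsIntegral ℤ z) :
    IsIntegral ℤ ((q.map (Int.castRingHom ℂ)).eval z) := by
  have h : (q.map (Int.castRingHom ℂ)).eval z = Polynomial.aeval z q := by
    rw [aeval_def, eval_map]
    norm_num
  rw [h]
  have hmem : Polynomial.aeval z q ∈ Algebra.adjoin ℤ {z} :=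
    Polynomial.aeval_mem_adjoin_singleton ℤ z
  have hle : Algebra.adjoin ℤ {z} ≤ integralClosure ℤ ℂ := by
    rw [Algebra.adjoin_le_iff]
    intro x hx
    rw [Set.mem_singleton_iff] at hx
    rw [hx]
    exact hz
  exact hle hmem

set_option maxHeartbeats 1600000 in
/-- If `f ∈ ℤ[x]` has degree `nr` and `f ≡ (xⁿ - 1)^r (mod m)` with `m ≥ 2`, and `g` is
a factor of `f` over `ℤ` with no cyclotomic factors and `g(1) ≠ 0`, then
`μ(g) ≥ log(m/2^r)·(deg g)/(nr)`. -/
theorem mahler_ge_log_m_div_two_pow (m : ℕ) (hm : 2 ≤ m)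
    (n r : ℕ) (hn : 0 < n) (hr : 0 < r)
    (f : Polynomial ℤ) (hfdeg : f.natDegree = n * r)
    (hcong : ∀ i : ℕ, (m : ℤ) ∣ (f - (X ^ n - 1) ^ r).coeff i)
    (g : Polynomial ℤ) (hg : g ∣ f) (hcyc : NoCyclotomicFactor g) (hg1 : g.eval 1 ≠ 0) :
    mahlerMeasure g ≥ Real.log ((m : ℝ) / 2 ^ r) * (g.natDegree : ℝ) / ((n : ℝ) * r) := by
  classical
  have hg0 : g ≠ 0 := fun h => hg1 (by simp [h])
  set toC := Int.castRingHom ℂ with htoC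
  have hinj : Function.Injective (⇑toC) := Int.cast_injective
  set gc := g.map toC with hgc
  have hgc0 : gc ≠ 0 := (Polynomial.map_ne_zero_iff hinj).2 hg0
  set D := g.natDegree with hD
  set L := g.leadingCoeff with hL
  have hL0 : L ≠ 0 := leadingCoeff_ne_zero.2 hg0
  set R := gc.roots with hR
  -- basic facts about gc
  have hgcsplits : gc.Splits := IsAlgClosed.splits gc
  have hgcdeg : gc.natDegree = D := natDegree_map_eq_of_injective hinj g
  have hcardR : Multiset.card R = D := by
    have h1 := hgcsplits.natDegree_eq_card_roots
    rw [hgcdeg] at h1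
    exact h1.symm
  have hgclead : gc.leadingCoeff = (L : ℂ) := leadingCoeff_map_of_injective hinj g
  -- the polynomial E with f = (X^n-1)^r + m*E
  obtain ⟨E, hE⟩ : ∃ E, f = (X ^ n - 1) ^ r + C (m:ℤ) * E := by
    obtain ⟨E, hE⟩ := (C_dvd_iff_dvd_coeff (m:ℤ) (f - (X ^ n - 1) ^ r)).2 hcong
    exact ⟨E, by rw [← hE]; ring⟩
  have hmonicXn : ((X:Polynomial ℤ) ^ n - 1).Monic := by
    simpa using monic_X_pow_sub_C (1:ℤ) hn.ne'
  have hXndeg : ((X:Polynomial ℤ) ^ n - 1).natDegree = n := by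
    have : ((X:Polynomial ℤ) ^ n - 1) = X ^ n - C 1 := by simp
    rw [this, natDegree_X_pow_sub_C]
  have hXnrdeg : (((X:Polynomial ℤ) ^ n - 1) ^ r).natDegree = n * r := by
    rw [hmonicXn.natDegree_pow, hXndeg, mul_comm]
  have hm0 : (m:ℤ) ≠ 0 := by positivity
  have hEdeg : E.natDegree ≤ n * r := by
    have h1 : C (m:ℤ) * E = f - (X ^ n - 1) ^ r := by rw [hE]; ring
    have h2 : (f - (X ^ n - 1) ^ r).natDegree ≤ n * r := by
      refine le_trans (natDegree_sub_le _ _) ?_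
      simp [hfdeg, hXnrdeg]
    rwa [← h1, natDegree_C_mul hm0] at h2
  -- coprimality of m and L
  obtain ⟨w, hw⟩ := hg
  have hf0 : f ≠ 0 := by
    intro h
    rw [h, natDegree_zero] at hfdeg
    exact (Nat.mul_pos hn hr).ne' hfdeg.symm
  have hcop : IsCoprime (m:ℤ) L := by
    have hflead : f.coeff (n * r) = L * w.leadingCoeff := by
      rw [← hfdeg]
      show f.leadingCoeff = _
      rw [hw, leadingCoeff_mul]
    have hXlead : (((X:Polynomial ℤ) ^ n - 1) ^ r).coeff (n * r) = 1 := by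
      have := (hmonicXn.pow r).leadingCoeff
      rwa [leadingCoeff, hXnrdeg] at this
    obtain ⟨k, hk⟩ := hcong (n * r)
    rw [coeff_sub, hflead, hXlead] at hk
    exact ⟨-k, w.leadingCoeff, by linear_combination hk⟩
  -- roots of unity: the multiset Z
  set xc := ((X:Polynomial ℤ) ^ n - 1).map toC with hxc
  have hxceq : xc = (X:Polynomial ℂ) ^ n - 1 := by
    rw [hxc]; simp
  set Z := xc.roots with hZ
  have hxcsplits : xc.Splits := IsAlgClosed.splits xc
  have hcardZ : Multiset.card Z = n := by
    have h1 := hxcsplits.natDegree_eq_card_roots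
    rw [← h1, hxceq]
    have : ((X:Polynomial ℂ) ^ n - 1) = X ^ n - C 1 := by simp
    rw [this, natDegree_X_pow_sub_C]
  have hzpow : ∀ z ∈ Z, z ^ n = 1 := by
    intro z hz
    have h0 : xc ≠ 0 := by
      rw [hxceq]
      intro h
      have := congrArg natDegree h
      rw [natDegree_zero] at this
      have h2 : ((X:Polynomial ℂ) ^ n - 1) = X ^ n - C 1 := by simp
      rw [h2, natDegree_X_pow_sub_C] at this
      exact hn.ne' this
    have := (mem_roots h0).1 hz
    rw [IsRoot, hxceq] at this
    simp only [eval_sub, eval_pow, eval_X, eval_one] at this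
    exact sub_eq_zero.1 this
  have hzint : ∀ z ∈ Z, IsIntegral ℤ z := by
    intro z hz
    refine ⟨X ^ n - 1, hmonicXn, ?_⟩
    have := hzpow z hz
    simp only [eval₂_sub, eval₂_pow, eval₂_X, eval₂_one]
    rw [this]
    ring
  -- g does not vanish at roots of unity
  have hgz : ∀ z ∈ Z, gc.eval z ≠ 0 := by
    intro z hz hzero
    have hzn := hzpow z hz
    have hfin : IsOfFinOrder z := isOfFinOrder_iff_pow_eq_one.2 ⟨n, hn, hzn⟩
    have hordpos : 0 < orderOf z := hfin.orderOf_pos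
    have hprim : IsPrimitiveRoot z (orderOf z) := IsPrimitiveRoot.orderOf z
    have haev : Polynomial.aeval z g = 0 := by
      rw [aeval_def, ← eval_map]
      exact hzero
    have hdvd : minpoly ℤ z ∣ g := minpoly.isIntegrallyClosed_dvd (hzint z hz) haev
    rw [← Polynomial.cyclotomic_eq_minpoly hprim hordpos] at hdvd
    exact hcyc (orderOf z) hordpos hdvd
  -- factorization facts
  have hgcfact : gc = C (L:ℂ) * (R.map fun a => X - C a).prod := by
    have := hgcsplits.eq_prod_roots
    rwa [hgclead] at this
  have hxcfact : ∀ a : ℂ, a ^ n - 1 = (Z.map fun z => a - z).prod := by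
    intro a
    have hlc1 : xc.leadingCoeff = 1 := (hmonicXn.map toC).leadingCoeff
    have h1 := hxcsplits.eq_prod_roots
    rw [hlc1, map_one, one_mul] at h1
    have h0 : a ^ n - 1 = xc.eval a := by rw [hxceq]; simp
    rw [h0]
    conv_lhs => rw [h1]
    rw [eval_multiset_prod, Multiset.map_map]
    congr 1
    apply Multiset.map_congr rfl
    intro z _
    simp
  have hgceval : ∀ a : ℂ, gc.eval a = (L:ℂ) * (R.map fun x => a - x).prod := by
    intro a
    conv_lhs => rw [hgcfact]
    simp only [eval_mul, eval_C, eval_multiset_prod, Multiset.map_map]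
    congr 2
    apply Multiset.map_congr rfl
    intro x _
    simp
  -- the key products
  set P1 : ℂ := (R.map fun a => a ^ n - 1).prod with hP1
  set Ac : ℂ := (Z.map fun z => gc.eval z).prod with hAc
  have hAP : Ac = (-1 : ℂ) ^ (n * D) * (L:ℂ) ^ n * P1 := by
    rw [hAc]
    have h1 : (Z.map fun z => gc.eval z) = Z.map fun z => (L:ℂ) * (R.map fun x => z - x).prod :=
      Multiset.map_congr rfl fun z _ => hgceval z
    rw [h1, msProdConstMul, hcardZ, msProdSwap Z R (fun z x => z - x)]
    have h2 : (R.map fun x => (Z.map fun z => z - x).prod)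
        = R.map fun x => (-1:ℂ) ^ n * (x ^ n - 1) := by
      apply Multiset.map_congr rfl
      intro x _
      rw [hxcfact x]
      have h3 : (Z.map fun z => z - x) = Z.map fun z => (-1:ℂ) * (x - z) := by
        apply Multiset.map_congr rfl
        intro z _
        ring
      rw [h3, msProdConstMul, hcardZ]
    rw [h2, msProdConstMul, hcardR, hP1]
    ring
  -- per-root identity
  set Ec := E.map toC with hEc
  have hroot : ∀ a ∈ R, (a ^ n - 1) ^ r = -(m:ℂ) * Ec.eval a := by
    intro a ha
    have hga : gc.eval a = 0 := by
      have := (mem_roots hgc0).1 ha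
      exact this
    have hfa : (f.map toC).eval a = 0 := by
      rw [hw, Polynomial.map_mul, eval_mul, hga, zero_mul]
    rw [hE] at hfa
    simp only [Polynomial.map_add, Polynomial.map_mul, Polynomial.map_pow,
      Polynomial.map_sub, Polynomial.map_one, Polynomial.map_C, map_natCast,
      Polynomial.map_X, Polynomial.map_natCast, eval_natCast, eval_add, eval_mul,
      eval_pow, eval_sub, eval_one, eval_X, eval_C] at hfa
    push_cast at hfa
    linear_combination hfa
  -- the second key product
  set Cc : ℂ := (R.map fun a => (L:ℂ) ^ (n * r) * Ec.eval a).prod with hCc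
  have hkeyC : (L:ℂ) ^ (n * r * D) * P1 ^ r = (-(m:ℂ)) ^ D * Cc := by
    have h1 : (R.map fun a => (L:ℂ) ^ (n * r) * (a ^ n - 1) ^ r).prod
        = (L:ℂ) ^ (n * r * D) * P1 ^ r := by
      rw [msProdConstMul, hcardR, hP1, ← Multiset.prod_map_pow, pow_mul]
      ring
    have h2 : (R.map fun a => (L:ℂ) ^ (n * r) * (a ^ n - 1) ^ r).prod
        = (R.map fun a => -(m:ℂ) * ((L:ℂ) ^ (n * r) * Ec.eval a)).prod := by
      apply congrArg
      apply Multiset.map_congr rfl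
      intro a ha
      rw [hroot a ha]
      ring
    rw [← h1, h2, msProdConstMul, hcardR, hCc]
  -- Ac and Cc are integers
  obtain ⟨sA, hsA⟩ := prod_eval_roots_rat (X ^ n - 1) g
  obtain ⟨sE, hsE⟩ := prod_eval_roots_rat g E
  have hAcrat : Ac = ((sA : ℚ) : ℂ) := by rw [hAc, ← hsA]
  have hAcint : IsIntegral ℤ Ac := by
    rw [hAc]
    have : ∀ x ∈ Z.map fun z => gc.eval z, x ∈ integralClosure ℤ ℂ := by
      intro x hx
      obtain ⟨z, hz, rfl⟩ := Multiset.mem_map.1 hx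
      exact evalIsIntegral g z (hzint z hz)
    exact Subalgebra.multiset_prod_mem _ this
  obtain ⟨a, hA⟩ := intOfRatIsIntegral Ac hAcint sA hAcrat
  have hCcrat : ∃ s : ℚ, Cc = (s : ℂ) := by
    refine ⟨(L : ℚ) ^ (n * r * D) * sE, ?_⟩
    rw [hCc, msProdConstMul, hcardR, ← pow_mul]
    have h2 : (R.map fun a => Ec.eval a).prod = ((sE : ℚ) : ℂ) := by rw [← hsE]
    rw [h2]
    push_cast
    ring
  have hCcint : IsIntegral ℤ Cc := by
    rw [hCc]
    have : ∀ x ∈ R.map fun a => (L:ℂ) ^ (n * r) * Ec.eval a, x ∈ integralClosure ℤ ℂ := by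
      intro x hx
      obtain ⟨α, hα, rfl⟩ := Multiset.mem_map.1 hx
      -- show L^(nr) * Ec.eval α is integral
      have haev : Polynomial.aeval α g = 0 := by
        rw [aeval_def, ← eval_map]
        exact (mem_roots hgc0).1 hα
      have hLa : IsIntegral ℤ ((L:ℂ) * α) := by
        have := isIntegral_leadingCoeff_smul g α haev
        rwa [zsmul_eq_mul] at this
      have hEdeg' : Ec.natDegree < n * r + 1 :=
        Nat.lt_succ_of_le (le_trans natDegree_map_le hEdeg)
      have heval : (L:ℂ) ^ (n * r) * Ec.eval α
          = ∑ i ∈ Finset.range (n * r + 1),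
              (Ec.coeff i * (L:ℂ) ^ (n * r - i)) * ((L:ℂ) * α) ^ i := by
        rw [eval_eq_sum_range' hEdeg' α, Finset.mul_sum]
        apply Finset.sum_congr rfl
        intro i hi
        have hi' : i ≤ n * r := Nat.lt_succ_iff.1 (Finset.mem_range.1 hi)
        have hsplitpow : (L:ℂ) ^ (n*r) = (L:ℂ) ^ (n*r - i) * (L:ℂ) ^ i := by
          rw [← pow_add, Nat.sub_add_cancel hi']
        rw [hsplitpow, mul_pow]
        ring
      rw [heval]
      apply Subalgebra.sum_mem
      intro i _
      have hcoeff : IsIntegral ℤ (Ec.coeff i) := by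
        rw [hEc, coeff_map]
        exact isIntegral_algebraMap
      exact Subalgebra.mul_mem _
        (Subalgebra.mul_mem _ hcoeff (Subalgebra.pow_mem _ isIntegral_algebraMap (n*r - i)))
        (Subalgebra.pow_mem _ hLa i)
    exact Subalgebra.multiset_prod_mem _ this
  obtain ⟨sC, hsC⟩ := hCcrat
  obtain ⟨c, hC⟩ := intOfRatIsIntegral Cc hCcint sC hsC
  -- Ac is nonzero
  have hAc0 : Ac ≠ 0 := by
    rw [hAc]
    apply Multiset.prod_ne_zero
    intro h0
    obtain ⟨z, hz, hzz⟩ := Multiset.mem_map.1 h0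
    exact hgz z hz hzz
  have ha0 : a ≠ 0 := by
    intro h
    rw [h] at hA
    simp at hA
    exact hAc0 hA
  -- Mahler measure as log of a product
  set Pm : ℝ := (R.map fun x => max 1 (‖x‖)).prod with hPm
  have hPm1 : (1:ℝ) ≤ Pm := msOneLeProd R _ (fun x _ => le_max_left _ _)
  have hLabs : (1:ℝ) ≤ |(L:ℝ)| := by
    have h1 : (1:ℤ) ≤ |L| := Int.one_le_abs hL0
    calc (1:ℝ) = ((1:ℤ):ℝ) := by norm_num
      _ ≤ ((|L|:ℤ):ℝ) := by exact_mod_cast h1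
      _ = |(L:ℝ)| := by push_cast; ring
  have hmu : mahlerMeasure g = Real.log (|(L:ℝ)| * Pm) := by
    rw [Real.log_mul (by linarith) (by linarith), hPm,
      msLogProd R _ (fun x _ => le_max_left _ _)]
    rfl
  rcases Nat.eq_zero_or_pos D with hD0 | hD1
  · -- degenerate case: deg g = 0
    rw [ge_iff_le, hD0]
    simp only [Nat.cast_zero, mul_zero, zero_div]
    rw [hmu]
    apply Real.log_nonneg
    nlinarith
  -- main case
  have hDsum : n * r * (D - 1) + n * r = n * r * D := by
    have h1 : D - 1 + 1 = D := Nat.succ_pred_eq_of_pos hD1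
    calc n * r * (D - 1) + n * r = n * r * (D - 1 + 1) := by ring
      _ = n * r * D := by rw [h1]
  have h1 : (L:ℂ) ^ (n * r * (D - 1)) * Ac ^ r
      = (-1:ℂ) ^ (n * D * r) * ((-(m:ℂ)) ^ D * Cc) := by
    rw [hAP, ← hkeyC, ← hDsum]
    ring
  have hintid : (L:ℤ) ^ (n * r * (D - 1)) * a ^ r
      = (-1:ℤ) ^ (n * D * r) * ((-(m:ℤ)) ^ D * c) := by
    rw [hA, hC] at h1
    exact_mod_cast h1
  have hdvd : (m:ℤ) ^ D ∣ a ^ r := by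
    have hdvd1 : (m:ℤ) ^ D ∣ (L:ℤ) ^ (n * r * (D - 1)) * a ^ r := by
      rw [hintid]
      refine ⟨(-1:ℤ) ^ (n * D * r) * ((-1:ℤ) ^ D) * c, ?_⟩
      rw [neg_pow]
      ring
    exact (hcop.pow (n := n * r * (D - 1))).dvd_of_dvd_mul_left hdvd1
  -- size bounds
  have hane : a ^ r ≠ 0 := pow_ne_zero r ha0
  have hle1 : (m:ℤ) ^ D ≤ |a ^ r| := Int.le_of_dvd (abs_pos.2 hane) ((dvd_abs _ _).2 hdvd)
  have hleR : ((m:ℝ)) ^ D ≤ |(a:ℝ)| ^ r := by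
    rw [abs_pow] at hle1
    exact_mod_cast hle1
  have habs : ‖Ac‖ ≤ 2 ^ D * (|(L:ℝ)| * Pm) ^ n := by
    rw [hAP, norm_mul, norm_mul, norm_pow, norm_pow]
    have hone : ‖(-1 : ℂ)‖ = 1 := by simp
    have habsL : ‖((L:ℤ):ℂ)‖ = |(L:ℝ)| := Complex.norm_intCast L
    rw [hone, one_pow, one_mul, habsL]
    have h3 : ‖P1‖ ≤ (2:ℝ) ^ D * Pm ^ n := by
      rw [hP1, (id (map_multiset_prod (normHom : ℂ →*₀ ℝ) _) :
        ‖(R.map fun a => a ^ n - 1).prod‖ = _), Multiset.map_map]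
      have h4 : (R.map fun x => ‖x ^ n - 1‖).prod
          ≤ (R.map fun x => 2 * (max 1 (‖x‖)) ^ n).prod := by
        apply msProdLe
        · intro x _
          exact norm_nonneg _
        · intro x _
          have hb1 : ‖x ^ n - 1‖ ≤ ‖x ^ n‖ + ‖(1:ℂ)‖ :=
            norm_sub_le _ _
          have hb2 : ‖x ^ n‖ = ‖x‖ ^ n := norm_pow _ _
          have hb3 : ‖x‖ ^ n ≤ (max 1 (‖x‖)) ^ n :=
            pow_le_pow_left₀ (norm_nonneg _) (le_max_right _ _) n
          have hb4 : (1:ℝ) ≤ (max 1 (‖x‖)) ^ n :=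
            one_le_pow₀ (le_max_left _ _)
          have hb5 : ‖(1:ℂ)‖ = 1 := by simp
          nlinarith
      calc (R.map fun x => (normHom : ℂ →*₀ ℝ) ((fun a => a ^ n - 1) x)).prod
          ≤ (R.map fun x => 2 * (max 1 (‖x‖)) ^ n).prod := h4
        _ = (2:ℝ) ^ D * Pm ^ n := by
            rw [msProdConstMul, hcardR, hPm, ← Multiset.prod_map_pow]
    calc |(L:ℝ)| ^ n * ‖P1‖ ≤ |(L:ℝ)| ^ n * ((2:ℝ) ^ D * Pm ^ n) := by
          apply mul_le_mul_of_nonneg_left h3 (by positivity)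
      _ = 2 ^ D * (|(L:ℝ)| * Pm) ^ n := by rw [mul_pow]; ring
  have habsa : |(a:ℝ)| = ‖Ac‖ := by
    rw [hA, Complex.norm_intCast]
  -- put everything together
  have hm0R : (0:ℝ) < (m:ℝ) := by positivity
  have hMg1 : (1:ℝ) ≤ |(L:ℝ)| * Pm := by nlinarith
  have hchain : ((m:ℝ)) ^ D ≤ (2 ^ D * (|(L:ℝ)| * Pm) ^ n) ^ r := by
    refine le_trans hleR ?_
    rw [habsa]
    exact pow_le_pow_left₀ (norm_nonneg _) habs r
  have hlog : (D:ℝ) * Real.log m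
      ≤ (r:ℝ) * ((D:ℝ) * Real.log 2 + (n:ℝ) * Real.log (|(L:ℝ)| * Pm)) := by
    have h5 : Real.log ((m:ℝ) ^ D) ≤ Real.log ((2 ^ D * (|(L:ℝ)| * Pm) ^ n) ^ r) :=
      Real.log_le_log (by positivity) hchain
    rw [Real.log_pow, Real.log_pow,
      Real.log_mul (by positivity) (by positivity), Real.log_pow, Real.log_pow] at h5
    exact h5
  rw [ge_iff_le, hmu, div_le_iff₀ (by positivity : (0:ℝ) < (n:ℝ) * r)]
  rw [Real.log_div (by positivity) (by positivity), Real.log_pow]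
  nlinarith [hlog]
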